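/- Let S be a commutative semiring and A a commutative S-algebra (with A a commutative semiring). Suppose that A, viewed as an S-semimodule, has no proper S-subsemimodule isomorphic to A, i.e., every S-submodule N of A with N ≃ₗ[S] A satisfies N = ⊤. Then every element of A is either a unit or multiplicatively non-cancellative (multiplication by it is not injective). -/

import Mathlib

/-- If a commutative `S`-algebra `A` has no proper `S`-subsemimodule isomorphic to `A`,
then every element of `A` is either a unit or multiplicatively non-cancellative. -/
theorem stmt_1 {S A : Type*} [CommSemiring S] [CommSemiring A] [Algebra S A]
    (h : ∀ N : Submodule S A, Nonempty (N ≃ₗ[S] A) → N = ⊤) :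
    ∀ a : A, IsUnit a ∨ ¬ Function.Injective (fun x : A => a * x) := by
  intro a
  by_cases hf : Function.Injective (fun x : A => a * x)
  · left
    have hinj : Function.Injective (LinearMap.mulLeft S a) := hf
    have := h (LinearMap.range (LinearMap.mulLeft S a))
      ⟨(LinearEquiv.ofInjective _ hinj).symm⟩
    have h1 : (1 : A) ∈ LinearMap.range (LinearMap.mulLeft S a) := this ▸ trivial
    obtain ⟨b, hb⟩ := h1
    exact IsUnit.of_mul_eq_one (a := a) b hb
  · exact Or.inr hf
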